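/- Let X_1, …, X_k be strings and let J ≥ 0. Suppose that for each i ∈ [1..k] we are given J pairwise disjoint substrings X_{i,1}, …, X_{i,J} of X_i appearing in left-to-right order. Then δ_E(X_1, …, X_k) ≤ Σ_{j=1}^J δ_E(X_{1,j}, X_{2,j}, …, X_{k,j}) + Σ_{i=1}^k (|X_i| − Σ_{j=1}^J |X_{i,j}|). -/

import Mathlib

/-- A cost structure for Levenshtein distance (as in the former Mathlib `Levenshtein.Cost`). -/
structure Levenshtein.Cost (α β δ : Type*) where
  delete : α → δ
  insert : β → δ
  substitute : α → β → δ

/-- The default cost: unit deletions and insertions, substitution free iff equal. -/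
def Levenshtein.defaultCost {α : Type*} [DecidableEq α] : Levenshtein.Cost α α ℕ where
  delete _ := 1
  insert _ := 1
  substitute a b := if a = b then 0 else 1

/-- Levenshtein distance with costs `C` (same recursion as the former Mathlib `levenshtein`). -/
def levenshtein {α β δ : Type*} [AddZeroClass δ] [Min δ] (C : Levenshtein.Cost α β δ) :
    List α → List β → δ
  | [], ys => (ys.map C.insert).sum
  | xs, [] => (xs.map C.delete).sum
  | x :: xs, y :: ys =>
    min (C.delete x + levenshtein C xs (y :: ys))
      (min (C.insert y + levenshtein C (x :: xs) ys) (C.substitute x y + levenshtein C xs ys))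
termination_by xs ys => xs.length + ys.length

/-- The Levenshtein edit distance between two strings. -/
def editDist {α : Type*} [DecidableEq α] (s t : List α) : ℕ :=
  levenshtein Levenshtein.defaultCost s t

/-- The median edit distance of a family of strings. -/
noncomputable def medianED {α : Type*} [DecidableEq α] (L : List (List α)) : ℕ :=
  sInf { d : ℕ | ∃ T : List α, d = (L.map fun s => editDist s T).sum }

/-- `frag X s l` is the contiguous fragment of `X` of length `l` starting at
(0-indexed) position `s`. -/
def frag {α : Type*} (X : List α) (s l : ℕ) : List α :=
  (X.drop s).take l

@[simp] lemma Levenshtein.defaultCost_delete {α : Type*} [DecidableEq α] (a : α) :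
    (Levenshtein.defaultCost : Levenshtein.Cost α α ℕ).delete a = 1 := rfl

@[simp] lemma Levenshtein.defaultCost_insert {α : Type*} [DecidableEq α] (a : α) :
    (Levenshtein.defaultCost : Levenshtein.Cost α α ℕ).insert a = 1 := rfl

@[simp] lemma Levenshtein.defaultCost_substitute {α : Type*} [DecidableEq α] (a b : α) :
    (Levenshtein.defaultCost : Levenshtein.Cost α α ℕ).substitute a b = if a = b then 0 else 1 := rfl

@[simp] lemma levenshtein_nil_nil {α β δ : Type*} [AddZeroClass δ] [Min δ]
    (C : Levenshtein.Cost α β δ) : levenshtein C [] [] = 0 := by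
  simp [levenshtein]

@[simp] lemma levenshtein_nil_cons {α β δ : Type*} [AddZeroClass δ] [Min δ]
    (C : Levenshtein.Cost α β δ) (y : β) (ys : List β) :
    levenshtein C [] (y :: ys) = C.insert y + levenshtein C [] ys := by
  simp [levenshtein]

@[simp] lemma levenshtein_cons_nil {α β δ : Type*} [AddZeroClass δ] [Min δ]
    (C : Levenshtein.Cost α β δ) (x : α) (xs : List α) :
    levenshtein C (x :: xs) [] = C.delete x + levenshtein C xs [] := by
  cases xs <;> simp [levenshtein]

lemma levenshtein_cons_cons {α β δ : Type*} [AddZeroClass δ] [Min δ]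
    (C : Levenshtein.Cost α β δ) (x : α) (xs : List α) (y : β) (ys : List β) :
    levenshtein C (x :: xs) (y :: ys) =
      min (C.delete x + levenshtein C xs (y :: ys))
        (min (C.insert y + levenshtein C (x :: xs) ys) (C.substitute x y + levenshtein C xs ys)) := by
  rw [levenshtein]

section aux

variable {α : Type*} [DecidableEq α]

lemma editDist_nil_right (s : List α) : editDist s [] = s.length := by
  induction s with
  | nil => simp [editDist]
  | cons x xs ih =>
    simp only [editDist, levenshtein_cons_nil] at *
    simp [ih, Nat.add_comm]

lemma editDist_le_cons_right (s : List α) (y : α) (ys : List α) :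
    editDist s (y :: ys) ≤ 1 + editDist s ys := by
  cases s with
  | nil => simp [editDist]
  | cons x xs =>
    simp only [editDist, levenshtein_cons_cons]
    refine le_trans (min_le_right _ _) (le_trans (min_le_left _ _) ?_)
    simp

lemma editDist_le_cons_left (x : α) (xs ys : List α) :
    editDist (x :: xs) ys ≤ 1 + editDist xs ys := by
  cases ys with
  | nil => simp [editDist]
  | cons y ys =>
    simp only [editDist, levenshtein_cons_cons]
    refine le_trans (min_le_left _ _) ?_
    simp

lemma editDist_append_le (A B C D : List α) :
    editDist (A ++ B) (C ++ D) ≤ editDist A C + editDist B D := by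
  induction A generalizing C with
  | nil =>
    induction C with
    | nil => simp
    | cons y C' ihC =>
      simp only [List.nil_append, List.cons_append] at *
      calc editDist B (y :: (C' ++ D)) ≤ 1 + editDist B (C' ++ D) :=
              editDist_le_cons_right _ _ _
        _ ≤ 1 + (editDist [] C' + editDist B D) := by omega
        _ = editDist [] (y :: C') + editDist B D := by
              simp [editDist, Nat.add_assoc]
  | cons x A' ihA =>
    induction C with
    | nil =>
      simp only [List.cons_append, List.nil_append] at *
      calc editDist (x :: (A' ++ B)) D ≤ 1 + editDist (A' ++ B) D :=
              editDist_le_cons_left _ _ _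
        _ ≤ 1 + (editDist A' [] + editDist B D) := by
              have := ihA []
              simp only [List.nil_append] at this
              omega
        _ = editDist (x :: A') [] + editDist B D := by
              simp [editDist, Nat.add_assoc]
    | cons y C' ihC =>
      simp only [List.cons_append] at *
      rw [show editDist (x :: A') (y :: C') =
        min (1 + editDist A' (y :: C'))
          (min (1 + editDist (x :: A') C')
            ((if x = y then 0 else 1) + editDist A' C')) from by
          simp [editDist, levenshtein_cons_cons]]
      rw [← Nat.add_min_add_right, ← Nat.add_min_add_right, le_min_iff, le_min_iff]
      refine ⟨?_, ?_, ?_⟩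
      · calc editDist (x :: (A' ++ B)) (y :: (C' ++ D))
            ≤ 1 + editDist (A' ++ B) (y :: (C' ++ D)) := editDist_le_cons_left _ _ _
          _ ≤ 1 + (editDist A' (y :: C') + editDist B D) := by
              have := ihA (y :: C'); simp only [List.cons_append] at this; omega
          _ = 1 + editDist A' (y :: C') + editDist B D := by omega
      · calc editDist (x :: (A' ++ B)) (y :: (C' ++ D))
            ≤ 1 + editDist (x :: (A' ++ B)) (C' ++ D) := editDist_le_cons_right _ _ _
          _ ≤ 1 + (editDist (x :: A') C' + editDist B D) := by omega
          _ = 1 + editDist (x :: A') C' + editDist B D := by omega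
      · have hsub : editDist (x :: (A' ++ B)) (y :: (C' ++ D)) ≤
            (if x = y then 0 else 1) + editDist (A' ++ B) (C' ++ D) := by
          simp only [editDist, levenshtein_cons_cons]
          exact le_trans (min_le_right _ _) (le_trans (min_le_right _ _) (by simp [editDist]))
        have := ihA C'
        omega

lemma frag_length (X : List α) (s l : ℕ) :
    (frag X s l).length = min l (X.length - s) := by
  simp [frag]

/-- Key lemma: decompose `X` as gaps + fragments. -/
lemma key_aux (n : ℕ) : ∀ (ps : List (ℕ × ℕ × List α)), ps.length = n →
    ∀ (X : List α), ps.Pairwise (fun a b => a.1 + a.2.1 ≤ b.1) →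
    (∀ p ∈ ps, p.1 + p.2.1 ≤ X.length) →
    (ps.map (fun p => p.2.1)).sum ≤ X.length ∧
    editDist X ((ps.map (fun p => p.2.2)).flatten) ≤
      (ps.map (fun p => editDist (frag X p.1 p.2.1) p.2.2)).sum +
        (X.length - (ps.map (fun p => p.2.1)).sum) := by
  induction n with
  | zero =>
    intro ps hlen X _ _
    rw [List.length_eq_zero_iff] at hlen
    subst hlen
    simp [editDist_nil_right]
  | succ n ih =>
    rintro ps hlen X hpw hv
    obtain ⟨⟨s, l, T⟩, ps, rfl⟩ : ∃ p tail, ps = p :: tail := by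
      cases ps with
      | nil => simp at hlen
      | cons a b => exact ⟨a, b, rfl⟩
    simp only [List.length_cons, Nat.succ.injEq] at hlen
    have hd : s + l ≤ X.length := hv _ List.mem_cons_self
    set d := s + l with hd_def
    have hhead : ∀ q ∈ ps, d ≤ q.1 := fun q hq => (List.pairwise_cons.mp hpw).1 q hq
    -- shifted list
    set ps' : List (ℕ × ℕ × List α) := ps.map (fun q => (q.1 - d, q.2.1, q.2.2)) with hps'
    have hpw' : ps'.Pairwise (fun a b => a.1 + a.2.1 ≤ b.1) := by
      rw [hps', List.pairwise_map]
      refine ((List.pairwise_cons.mp hpw).2).imp_of_mem ?_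
      intro a b ha hb hab
      have := hhead a ha
      dsimp only
      omega
    have hv' : ∀ q ∈ ps', q.1 + q.2.1 ≤ (X.drop d).length := by
      rw [hps']
      rintro q hq
      rw [List.mem_map] at hq
      obtain ⟨r, hr, rfl⟩ := hq
      have h1 := hv r (List.mem_cons_of_mem _ hr)
      have h2 := hhead r hr
      simp only [List.length_drop]
      omega
    obtain ⟨hsum', hle'⟩ := ih ps' (by rw [hps', List.length_map, hlen]) (X.drop d) hpw' hv'
    have hmap1 : ps'.map (fun p => p.2.1) = ps.map (fun p => p.2.1) := by
      rw [hps', List.map_map]; rfl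
    have hmap2 : ps'.map (fun p => p.2.2) = ps.map (fun p => p.2.2) := by
      rw [hps', List.map_map]; rfl
    have hmap3 : ps'.map (fun p => editDist (frag (X.drop d) p.1 p.2.1) p.2.2) =
        ps.map (fun p => editDist (frag X p.1 p.2.1) p.2.2) := by
      rw [hps', List.map_map]
      refine List.map_congr_left ?_
      intro q hq
      have h2 := hhead q hq
      simp only [Function.comp]
      congr 1
      show frag (X.drop d) (q.1 - d) q.2.1 = frag X q.1 q.2.1
      simp only [frag, List.drop_drop]
      congr 2
      omega
    rw [hmap1] at hsum' hle'
    rw [hmap2, hmap3] at hle'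
    simp only [List.length_drop] at hsum'
    constructor
    · simp only [List.map_cons, List.sum_cons]
      omega
    · simp only [List.map_cons, List.sum_cons, List.flatten_cons]
      have hX : X = X.take d ++ X.drop d := (List.take_append_drop d X).symm
      have step1 : editDist X (T ++ (ps.map (fun p => p.2.2)).flatten) ≤
          editDist (X.take d) T + editDist (X.drop d) ((ps.map (fun p => p.2.2)).flatten) := by
        conv_lhs => rw [hX]
        exact editDist_append_le _ _ _ _
      have step2 : editDist (X.take d) T ≤ s + editDist (frag X s l) T := by
        have : X.take d = X.take s ++ frag X s l := by
          rw [hd_def, frag, List.take_add]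
        rw [this, show T = [] ++ T from rfl]
        calc editDist (X.take s ++ frag X s l) ([] ++ T)
            ≤ editDist (X.take s) [] + editDist (frag X s l) T := editDist_append_le _ _ _ _
          _ ≤ s + editDist (frag X s l) T := by
              rw [editDist_nil_right]
              have : (X.take s).length ≤ s := by simp
              omega
      simp only [List.length_drop] at hle'
      omega

end aux

lemma key {α : Type*} [DecidableEq α] (ps : List (ℕ × ℕ × List α)) (X : List α)
    (hpw : ps.Pairwise (fun a b => a.1 + a.2.1 ≤ b.1))
    (hv : ∀ p ∈ ps, p.1 + p.2.1 ≤ X.length) :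
    (ps.map (fun p => p.2.1)).sum ≤ X.length ∧
    editDist X ((ps.map (fun p => p.2.2)).flatten) ≤
      (ps.map (fun p => editDist (frag X p.1 p.2.1) p.2.2)).sum +
        (X.length - (ps.map (fun p => p.2.1)).sum) :=
  key_aux ps.length ps rfl X hpw hv



/-- Given, for each `i`, `J` pairwise disjoint substrings
`X_{i,1}, …, X_{i,J}` of `X_i` in left-to-right order, the median edit distance of
`X₁, …, X_k` is at most the sum over `j` of the median edit distances of the windows
`(X_{1,j}, …, X_{k,j})` plus `Σᵢ (|Xᵢ| − Σⱼ |X_{i,j}|)`. -/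
theorem median_le_windowed_sum
    {α : Type*} [DecidableEq α] (k J : ℕ) (X : Fin k → List α)
    (start len : Fin k → Fin J → ℕ)
    (hvalid : ∀ i j, start i j + len i j ≤ (X i).length)
    (horder : ∀ (i : Fin k) (j j' : Fin J), j < j' → start i j + len i j ≤ start i j') :
    medianED (List.ofFn X) ≤
      (∑ j, medianED (List.ofFn fun i => frag (X i) (start i j) (len i j))) +
        ∑ i, ((X i).length - ∑ j, (frag (X i) (start i j) (len i j)).length) := by
  classical
  -- choose optimal medians for each window
  have hmem : ∀ j : Fin J, ∃ T : List α,
      medianED (List.ofFn fun i => frag (X i) (start i j) (len i j)) =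
        ((List.ofFn fun i => frag (X i) (start i j) (len i j)).map
          fun s => editDist s T).sum := by
    intro j
    have hne : {d : ℕ | ∃ T : List α, d =
        ((List.ofFn fun i => frag (X i) (start i j) (len i j)).map
          fun s => editDist s T).sum}.Nonempty := ⟨_, [], rfl⟩
    exact Nat.sInf_mem hne
  choose T hT using hmem
  set Tfull : List α := (List.ofFn T).flatten with hTfull
  -- bound medianED by the candidate Tfull
  have h1 : medianED (List.ofFn X) ≤ ((List.ofFn X).map fun s => editDist s Tfull).sum :=
    Nat.sInf_le ⟨Tfull, rfl⟩
  have hsum : ((List.ofFn X).map fun s => editDist s Tfull).sum =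
      ∑ i, editDist (X i) Tfull := by
    rw [List.map_ofFn, List.sum_ofFn]; rfl
  rw [hsum] at h1
  -- per-string bound via `key`
  have h2 : ∀ i, editDist (X i) Tfull ≤
      (∑ j, editDist (frag (X i) (start i j) (len i j)) (T j)) +
        ((X i).length - ∑ j, len i j) := by
    intro i
    have := (key (List.ofFn fun j => (start i j, len i j, T j)) (X i)
      (by
        rw [List.pairwise_ofFn]
        intro j j' hjj'
        exact horder i j j' hjj')
      (by
        intro p hp
        rw [List.mem_ofFn] at hp
        obtain ⟨j, rfl⟩ := hp
        exact hvalid i j)).2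
    have e1 : ((List.ofFn fun j => (start i j, len i j, T j)).map fun p => p.2.2).flatten
        = Tfull := by
      rw [List.map_ofFn, hTfull]; rfl
    have e2 : ((List.ofFn fun j => (start i j, len i j, T j)).map
        fun p => editDist (frag (X i) p.1 p.2.1) p.2.2).sum =
        ∑ j, editDist (frag (X i) (start i j) (len i j)) (T j) := by
      rw [List.map_ofFn, List.sum_ofFn]; rfl
    have e3 : ((List.ofFn fun j => (start i j, len i j, T j)).map fun p => p.2.1).sum =
        ∑ j, len i j := by
      rw [List.map_ofFn, List.sum_ofFn]; rfl
    rw [e1, e2, e3] at this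
    exact this
  -- fragment lengths equal `len`
  have hlen : ∀ i j, (frag (X i) (start i j) (len i j)).length = len i j := by
    intro i j
    rw [frag_length]
    have := hvalid i j
    omega
  -- the per-window sum equals the window median
  have h3 : ∀ j : Fin J,
      medianED (List.ofFn fun i => frag (X i) (start i j) (len i j)) =
        ∑ i, editDist (frag (X i) (start i j) (len i j)) (T j) := by
    intro j
    rw [hT j, List.map_ofFn, List.sum_ofFn]; rfl
  calc medianED (List.ofFn X) ≤ ∑ i, editDist (X i) Tfull := h1
    _ ≤ ∑ i, ((∑ j, editDist (frag (X i) (start i j) (len i j)) (T j)) +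
          ((X i).length - ∑ j, len i j)) := Finset.sum_le_sum fun i _ => h2 i
    _ = (∑ i, ∑ j, editDist (frag (X i) (start i j) (len i j)) (T j)) +
          ∑ i, ((X i).length - ∑ j, len i j) := Finset.sum_add_distrib
    _ = (∑ j, ∑ i, editDist (frag (X i) (start i j) (len i j)) (T j)) +
          ∑ i, ((X i).length - ∑ j, len i j) := by rw [Finset.sum_comm]
    _ = (∑ j, medianED (List.ofFn fun i => frag (X i) (start i j) (len i j))) +
          ∑ i, ((X i).length - ∑ j, (frag (X i) (start i j) (len i j)).length) := by
        congr 1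
        · exact Finset.sum_congr rfl fun j _ => (h3 j).symm
        · exact Finset.sum_congr rfl fun i _ => by
            congr 1
            exact (Finset.sum_congr rfl fun j _ => (hlen i j).symm)
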